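/- arXiv:1110.5669 — 5 statements merged into one kernel-verified Lean document; each statement's English description precedes it below -/
import Mathlib

section
/- Let k ≥ 7 and ℓ ≥ 10^7·k^6 be integers such that k is the minimal integer greater than 2 that does not divide ℓ. Let H be an oriented graph which contains a directed path of length at most 64k from any vertex to any other vertex. If H contains a closed walk W with a edges going forward and b edges going backward, for some a ≠ b with a + b = |V(W)| < k, then H contains a closed directed walk of length ℓ. -/
/-- Out-degree of `v` in the digraph with edge relation `E`. -/
noncomputable def OutDeg {V : Type} (E : V → V → Prop) (v : V) : ℕ := {w | E v w}.ncard

/-- In-degree of `v` in the digraph with edge relation `E`. -/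
noncomputable def InDeg {V : Type} (E : V → V → Prop) (v : V) : ℕ := {w | E w v}.ncard

/-- `E` is an oriented graph: no loops and no pair of vertices joined in both directions. -/
def IsOriented {V : Type} (E : V → V → Prop) : Prop :=
  (∀ v, ¬ E v v) ∧ ∀ u v, E u v → ¬ E v u

/-- There is a closed directed walk of length `l`. -/
def HasClosedDirWalk {V : Type} (E : V → V → Prop) (l : ℕ) : Prop :=
  ∃ f : ℕ → V, f l = f 0 ∧ ∀ i < l, E (f i) (f (i + 1))

/-- There is a directed cycle of length `s` (a closed directed walk with distinct vertices). -/
def HasDirCycle {V : Type} (E : V → V → Prop) (s : ℕ) : Prop :=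
  3 ≤ s ∧ ∃ f : ℕ → V, f s = f 0 ∧ (∀ i < s, E (f i) (f (i + 1))) ∧
    Set.InjOn f (Set.Iio s)

/-- There is a directed path of length `m` from `x` to `y`. -/
def HasDirPath {V : Type} (E : V → V → Prop) (x y : V) (m : ℕ) : Prop :=
  ∃ f : ℕ → V, f 0 = x ∧ f m = y ∧ (∀ i < m, E (f i) (f (i + 1))) ∧
    Set.InjOn f (Set.Iic m)

/-- There is a closed walk (in the underlying graph) of length `a + b` with exactly `a`
edges oriented in the direction of traversal and exactly `b` against it. -/
def HasMixedClosedWalk {V : Type} (E : V → V → Prop) (a b : ℕ) : Prop :=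
  ∃ f : ℕ → V, f (a + b) = f 0 ∧
    (∀ i < a + b, E (f i) (f (i + 1)) ∨ E (f (i + 1)) (f i)) ∧
    {i : ℕ | i < a + b ∧ E (f i) (f (i + 1))}.ncard = a ∧
    {i : ℕ | i < a + b ∧ E (f (i + 1)) (f i)}.ncard = b



section Walks
variable {V : Type} {E : V → V → Prop}

def WalkFT (E : V → V → Prop) (x y : V) (m : ℕ) : Prop :=
  ∃ f : ℕ → V, f 0 = x ∧ f m = y ∧ ∀ i < m, E (f i) (f (i + 1))

lemma walkFT_refl (x : V) : WalkFT E x x 0 := ⟨fun _ => x, rfl, rfl, by omega⟩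

lemma walkFT_edge {x y : V} (h : E x y) : WalkFT E x y 1 := by
  refine ⟨fun i => if i = 0 then x else y, by simp, by simp, ?_⟩
  intro i hi
  interval_cases i
  simpa using h

lemma walkFT_trans {x y z : V} {p q : ℕ} (h1 : WalkFT E x y p) (h2 : WalkFT E y z q) :
    WalkFT E x z (p + q) := by
  obtain ⟨f, hf0, hfp, hfE⟩ := h1
  obtain ⟨g, hg0, hgq, hgE⟩ := h2
  refine ⟨fun i => if i ≤ p then f i else g (i - p), by simp [hf0], ?_, ?_⟩
  · by_cases hq : q = 0
    · simp [hq, hfp, ← hg0, hq ▸ hgq]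
    · have : ¬ (p + q ≤ p) := by omega
      simp only [this, if_false]
      simpa using hgq
  · intro i hi
    by_cases hip : i < p
    · have h1' : i ≤ p := by omega
      have h2' : i + 1 ≤ p := by omega
      simp only [h1', h2', if_true]
      exact hfE i hip
    · have key : ∀ j, p ≤ j → (if j ≤ p then f j else g (j - p)) = g (j - p) := by
        intro j hj
        by_cases h : j ≤ p
        · have : j = p := by omega
          simp [this, hfp, hg0]
        · simp [h]
      show E (if i ≤ p then f i else g (i - p)) (if i + 1 ≤ p then f (i + 1) else g (i + 1 - p))
      rw [key i (by omega), key (i + 1) (by omega)]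
      have : i + 1 - p = (i - p) + 1 := by omega
      rw [this]
      exact hgE (i - p) (by omega)

lemma walkFT_mul {x : V} {p : ℕ} (h : WalkFT E x x p) (t : ℕ) : WalkFT E x x (t * p) := by
  induction t with
  | zero => simpa using walkFT_refl x
  | succ t ih =>
      have := walkFT_trans ih h
      have he : t * p + p = (t + 1) * p := by ring
      rwa [he] at this

lemma walkFT_chain (ψ : ℕ → V) (c : ℕ → ℕ) (n : ℕ)
    (h : ∀ i < n, WalkFT E (ψ i) (ψ (i + 1)) (c i)) :
    WalkFT E (ψ 0) (ψ n) (∑ i ∈ Finset.range n, c i) := by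
  induction n with
  | zero => simpa using walkFT_refl (ψ 0)
  | succ n ih =>
      rw [Finset.sum_range_succ]
      exact walkFT_trans (ih fun i hi => h i (by omega)) (h n (by omega))

end Walks

lemma numth (Y d n : ℕ) (hY : 1 ≤ Y) (hd : 1 ≤ d) (hg : Nat.gcd Y d ∣ n)
    (hn : Y * (Y + d) ≤ n) : ∃ α β : ℕ, n = α * Y + β * (Y + d) := by
  set g := Nat.gcd Y d with hgdef
  have hgpos : 0 < g := Nat.gcd_pos_of_pos_left d hY
  set Y' := Y / g with hY'
  set d' := d / g with hd'
  have hYg : g * Y' = Y := Nat.mul_div_cancel' (Nat.gcd_dvd_left Y d)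
  have hdg : g * d' = d := Nat.mul_div_cancel' (Nat.gcd_dvd_right Y d)
  obtain ⟨n', hn'⟩ := hg
  have hco : Nat.Coprime d' Y' := (Nat.coprime_div_gcd_div_gcd hgpos).symm
  have hY'pos : 0 < Y' :=
    Nat.div_pos (Nat.le_of_dvd (by omega) (Nat.gcd_dvd_left Y d)) hgpos
  haveI : NeZero Y' := ⟨by omega⟩
  set u := ZMod.unitOfCoprime d' hco with hu
  set β := (((u⁻¹ : (ZMod Y')ˣ) : ZMod Y') * (n' : ZMod Y')).val with hβ
  have hβlt : β < Y' := ZMod.val_lt _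
  have hβY : β ≤ Y := le_trans (le_of_lt hβlt) (Nat.div_le_self Y g)
  have hmod : β * d' ≡ n' [MOD Y'] := by
    rw [← ZMod.natCast_eq_natCast_iff]
    push_cast
    rw [hβ, ZMod.natCast_zmod_val, ← ZMod.coe_unitOfCoprime d' hco]
    calc ((u⁻¹ : (ZMod Y')ˣ) : ZMod Y') * (n' : ZMod Y') * (u : ZMod Y')
        = (n' : ZMod Y') * (((u⁻¹ : (ZMod Y')ˣ) : ZMod Y') * (u : ZMod Y')) := by ring
      _ = (n' : ZMod Y') := by rw [Units.inv_mul]; exact mul_one _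
  have hmod2 : β * d ≡ n [MOD Y] := by
    have := Nat.ModEq.mul_left' (c := g) hmod
    rw [hYg] at this
    have h1 : g * (β * d') = β * d := by rw [← hdg]; ring
    have h2 : g * n' = n := hn'.symm
    rwa [h1, h2] at this
  have hYdn : Y * d ≤ n := le_trans (Nat.mul_le_mul_left Y (by omega)) hn
  have hβd : β * d ≤ n := le_trans (Nat.mul_le_mul_right d hβY) hYdn
  obtain ⟨C, hC⟩ := (Nat.modEq_iff_dvd' hβd).mp hmod2
  have hCY : Y ≤ C := by
    have h2 : Y * Y ≤ Y * C := by
      rw [← hC]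
      have : Y * Y + Y * d ≤ n := by rw [← Nat.mul_add]; exact hn
      have h3 : β * d ≤ Y * d := Nat.mul_le_mul_right d hβY
      omega
    exact Nat.le_of_mul_le_mul_left h2 (by omega)
  have hbC : β ≤ C := by omega
  refine ⟨C - β, β, ?_⟩
  have hCeq : (n : ℤ) = Y * C + β * d := by
    have := hC
    zify [hβd] at this
    linarith
  zify [hbC]
  linear_combination hCeq


/-- Lemma 2.6: with `k, ℓ` as in (*), let `H` be an oriented graph containing a directed path
of length at most `64k` from any vertex to any other vertex. If `H` contains a closed walk `W`
on `a + b = |V(W)|` distinct vertices with `a` edges going forwards and `b` edges going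
backwards, for some `a ≠ b` with `a + b < k`, then `H` contains a closed directed walk of
length `ℓ`. -/
theorem stmt_8 (k l : ℕ) (hk : 7 ≤ k) (hl : 10 ^ 7 * k ^ 6 ≤ l)
    (hknd : ¬ k ∣ l) (hmin : ∀ m : ℕ, 2 < m → m < k → m ∣ l)
    (V : Type) (E : V → V → Prop) (hE : IsOriented E)
    (hpath : ∀ x y : V, x ≠ y → ∃ m ≤ 64 * k, HasDirPath E x y m)
    (a b : ℕ) (hab : a ≠ b) (habk : a + b < k)
    (hW : ∃ f : ℕ → V, f (a + b) = f 0 ∧ Set.InjOn f (Set.Iio (a + b)) ∧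
      (∀ i < a + b, E (f i) (f (i + 1)) ∨ E (f (i + 1)) (f i)) ∧
      {i : ℕ | i < a + b ∧ E (f i) (f (i + 1))}.ncard = a ∧
      {i : ℕ | i < a + b ∧ E (f (i + 1)) (f i)}.ncard = b) :
    HasClosedDirWalk E l := by
  classical
  obtain ⟨ψ, hψc, hinj, hor, hca, hcb⟩ := hW
  set n := a + b with hn
  have hn1 : 1 ≤ n := by omega
  -- the backward-edge index set
  set FB : Finset ℕ := (Finset.range n).filter (fun i => E (ψ (i + 1)) (ψ i)) with hFB
  have hFBcard : FB.card = b := by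
    rw [← hcb]
    have : {i : ℕ | i < a + b ∧ E (ψ (i + 1)) (ψ i)} = ↑FB := by
      ext i; simp [hFB, Finset.mem_filter, Finset.mem_range, hn]
    rw [this, Set.ncard_coe_finset]
  -- choose directed paths replacing backward edges
  have hchoice : ∀ i : ℕ, ∃ mi : ℕ, E (ψ (i + 1)) (ψ i) →
      (1 ≤ mi ∧ mi ≤ 64 * k ∧ WalkFT E (ψ i) (ψ (i + 1)) mi) := by
    intro i
    by_cases h : E (ψ (i + 1)) (ψ i)
    · have hne : ψ i ≠ ψ (i + 1) := by
        intro heq; rw [heq] at h; exact hE.1 _ h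
      obtain ⟨mi, hmle, g, hg0, hgm, hgE, -⟩ := hpath (ψ i) (ψ (i + 1)) hne
      refine ⟨mi, fun _ => ⟨?_, hmle, ⟨g, hg0, hgm, hgE⟩⟩⟩
      rcases Nat.eq_zero_or_pos mi with h0 | h1
      · exact absurd (by rw [← hg0, ← hgm, h0]) hne
      · exact h1
    · exact ⟨0, fun h' => absurd h' h⟩
  choose m hm using hchoice
  set M := ∑ i ∈ FB, m i with hM
  -- forward edges are exactly the non-backward ones among the steps
  have hfilter_not : (Finset.range n).filter (fun i => ¬ E (ψ (i + 1)) (ψ i)) =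
      (Finset.range n).filter (fun i => E (ψ i) (ψ (i + 1))) := by
    apply Finset.filter_congr
    intro i hi
    have hi' : i < n := Finset.mem_range.mp hi
    rcases hor i hi' with h | h
    · simp [h, hE.2 _ _ h]
    · simp [h, hE.1, hE.2 _ _ h]
  have hFFcard : ((Finset.range n).filter (fun i => E (ψ i) (ψ (i + 1)))).card = a := by
    rw [← hca]
    have : {i : ℕ | i < a + b ∧ E (ψ i) (ψ (i + 1))} =
        ↑((Finset.range n).filter (fun i => E (ψ i) (ψ (i + 1)))) := by
      ext i; simp [Finset.mem_filter, Finset.mem_range, hn]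
    rw [this, Set.ncard_coe_finset]
  set x := ψ 0 with hx
  -- walk of length a + M
  have hwL1 : WalkFT E x x (a + M) := by
    have hchain := walkFT_chain (E := E) ψ (fun i => if E (ψ (i + 1)) (ψ i) then m i else 1) n ?_
    · have hsum : ∑ i ∈ Finset.range n, (if E (ψ (i + 1)) (ψ i) then m i else 1) = a + M := by
        rw [← Finset.sum_filter_add_sum_filter_not (Finset.range n) (fun i => E (ψ (i + 1)) (ψ i))]
        have h1 : ∑ i ∈ FB, (if E (ψ (i + 1)) (ψ i) then m i else 1) = M := by
          apply Finset.sum_congr rfl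
          intro i hi
          rw [if_pos (Finset.mem_filter.mp hi).2]
        have h2 : ∑ i ∈ (Finset.range n).filter (fun i => ¬ E (ψ (i + 1)) (ψ i)),
            (if E (ψ (i + 1)) (ψ i) then m i else 1) = a := by
          rw [Finset.sum_congr rfl (fun i hi => if_neg (Finset.mem_filter.mp hi).2),
            Finset.sum_const, smul_eq_mul, mul_one, hfilter_not, hFFcard]
        rw [h1, h2]; omega
      rw [hsum] at hchain
      rw [hn] at hψc
      rwa [hψc] at hchain
    · intro i hi
      show WalkFT E (ψ i) (ψ (i + 1)) (if E (ψ (i + 1)) (ψ i) then m i else 1)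
      by_cases hB : E (ψ (i + 1)) (ψ i)
      · rw [if_pos hB]; exact (hm i hB).2.2
      · rw [if_neg hB]
        rcases hor i hi with h | h
        · exact walkFT_edge h
        · exact absurd h hB
  -- walk of length a + b + 2M
  have hwZ : WalkFT E x x (a + b + 2 * M) := by
    have hchain := walkFT_chain (E := E) ψ (fun i => if E (ψ (i + 1)) (ψ i) then 2 * m i + 1 else 1) n ?_
    · have hsum : ∑ i ∈ Finset.range n, (if E (ψ (i + 1)) (ψ i) then 2 * m i + 1 else 1)
          = a + b + 2 * M := by
        rw [← Finset.sum_filter_add_sum_filter_not (Finset.range n) (fun i => E (ψ (i + 1)) (ψ i))]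
        have h1 : ∑ i ∈ FB, (if E (ψ (i + 1)) (ψ i) then 2 * m i + 1 else 1)
            = 2 * M + b := by
          rw [Finset.sum_congr rfl (fun i hi => if_pos (Finset.mem_filter.mp hi).2)]
          rw [Finset.sum_add_distrib, ← Finset.mul_sum, Finset.sum_const, smul_eq_mul, mul_one,
            hFBcard]
        have h2 : ∑ i ∈ (Finset.range n).filter (fun i => ¬ E (ψ (i + 1)) (ψ i)),
            (if E (ψ (i + 1)) (ψ i) then 2 * m i + 1 else 1) = a := by
          rw [Finset.sum_congr rfl (fun i hi => if_neg (Finset.mem_filter.mp hi).2),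
            Finset.sum_const, smul_eq_mul, mul_one, hfilter_not, hFFcard]
        rw [h1, h2]; omega
      rw [hsum] at hchain
      rw [hn] at hψc
      rwa [hψc] at hchain
    · intro i hi
      show WalkFT E (ψ i) (ψ (i + 1)) (if E (ψ (i + 1)) (ψ i) then 2 * m i + 1 else 1)
      by_cases hB : E (ψ (i + 1)) (ψ i)
      · rw [if_pos hB]
        have hp := (hm i hB).2.2
        have he : WalkFT E (ψ (i + 1)) (ψ i) 1 := walkFT_edge hB
        have := walkFT_trans (walkFT_trans hp he) hp
        have harith : m i + 1 + m i = 2 * m i + 1 := by ring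
        rwa [harith] at this
      · rw [if_neg hB]
        rcases hor i hi with h | h
        · exact walkFT_edge h
        · exact absurd h hB
  -- bounds on M
  have hMub : M ≤ 64 * k * k := by
    have h1 : M ≤ FB.card * (64 * k) := by
      rw [hM]
      calc ∑ i ∈ FB, m i ≤ ∑ _i ∈ FB, (64 * k) :=
            Finset.sum_le_sum (fun i hi => (hm i (Finset.mem_filter.mp hi).2).2.1)
        _ = FB.card * (64 * k) := by rw [Finset.sum_const, smul_eq_mul]
    have h2 : FB.card * (64 * k) ≤ k * (64 * k) := by
      apply Nat.mul_le_mul_right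
      omega
    calc M ≤ k * (64 * k) := le_trans h1 h2
      _ = 64 * k * k := by ring
  have hMlb : b ≤ M := by
    have h1 : ∑ _i ∈ FB, 1 ≤ ∑ i ∈ FB, m i :=
      Finset.sum_le_sum (fun i hi => (hm i (Finset.mem_filter.mp hi).2).1)
    have h2 : ∑ _i ∈ FB, 1 = FB.card := by simp
    omega
  -- the two key closed walks at x : lengths Y0 = 2a + 2M and Z = a + b + 2M, Z - Y0 = b - a
  have hwY0 : WalkFT E x x (2 * a + 2 * M) := by
    have := walkFT_trans hwL1 hwL1
    have harith : (a + M) + (a + M) = 2 * a + 2 * M := by ring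
    rwa [harith] at this
  -- choose (Y, d) with Y, Y+d walk lengths, 1 ≤ d < k
  obtain ⟨Y, d, hwY, hwYd, hY1, hd1, hdk, hdab⟩ :
      ∃ Y d : ℕ, WalkFT E x x Y ∧ WalkFT E x x (Y + d) ∧ 1 ≤ Y ∧ 1 ≤ d ∧ d < k ∧
        Y + d ≤ 2 * a + 2 * b + 2 * M := by
    rcases Nat.lt_or_ge a b with hlt | hge
    · refine ⟨2 * a + 2 * M, b - a, hwY0, ?_, by omega, by omega, by omega, by omega⟩
      have h : 2 * a + 2 * M + (b - a) = a + b + 2 * M := by omega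
      rwa [h]
    · have hgt : b < a := by omega
      refine ⟨a + b + 2 * M, a - b, hwZ, ?_, by omega, by omega, by omega, by omega⟩
      have h : a + b + 2 * M + (a - b) = 2 * a + 2 * M := by omega
      rwa [h]
  -- gcd divides l
  have hgdl : Nat.gcd Y d ∣ l := by
    have hg1 : 1 ≤ Nat.gcd Y d := Nat.gcd_pos_of_pos_left d hY1
    have hgd : Nat.gcd Y d ∣ d := Nat.gcd_dvd_right Y d
    have hgk : Nat.gcd Y d < k := lt_of_le_of_lt (Nat.le_of_dvd (by omega) hgd) hdk
    rcases Nat.lt_or_ge (Nat.gcd Y d) 3 with h3 | h3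
    · interval_cases h : (Nat.gcd Y d)
      · exact one_dvd l
      · exact dvd_trans (by norm_num) (hmin 4 (by norm_num) (by omega))
    · exact hmin _ (by omega) hgk
  -- size bound
  have hsize : Y * (Y + d) ≤ l := by
    have hkk : k ≤ k * k := Nat.le_mul_of_pos_left k (by omega)
    have hab2 : a + b ≤ k := by omega
    have hbound : Y + d ≤ 130 * (k * k) := by linarith
    have hY' : Y ≤ 130 * (k * k) := le_trans (Nat.le_add_right Y d) hbound
    have h1 : Y * (Y + d) ≤ 130 * (k * k) * (130 * (k * k)) := Nat.mul_le_mul hY' hbound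
    have h2 : 130 * (k * k) * (130 * (k * k)) = 16900 * k ^ 4 := by ring
    have h3 : k ^ 4 ≤ k ^ 6 := Nat.pow_le_pow_right (by omega) (by norm_num)
    have h4 : 16900 * k ^ 4 ≤ 10 ^ 7 * k ^ 6 :=
      Nat.mul_le_mul (by norm_num) h3
    omega
  obtain ⟨α, β, hrep⟩ := numth Y d l hY1 hd1 hgdl hsize
  have hw := walkFT_trans (walkFT_mul hwY α) (walkFT_mul hwYd β)
  rw [← hrep] at hw
  obtain ⟨F, hF0, hFl, hFE⟩ := hw
  exact ⟨F, by rw [hFl, hF0], hFE⟩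
end

section
/- Let k ≥ 7 and ℓ ≥ 10^7·k^6 be integers such that k is the minimal integer greater than 2 that does not divide ℓ. Suppose H is an oriented graph which contains a directed path of length at most 64k from any vertex to any other vertex. If for some odd s < k the underlying undirected graph of H contains a cycle of length s (i.e. H contains some orientation of a cycle of length s), then H contains a closed directed walk of length ℓ. -/

def DWalk {V : Type} (E : V → V → Prop) (x y : V) (n : ℕ) : Prop :=
  ∃ f : ℕ → V, f 0 = x ∧ f n = y ∧ ∀ i < n, E (f i) (f (i + 1))

lemma dwalk_nil {V : Type} (E : V → V → Prop) (x : V) : DWalk E x x 0 :=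
  ⟨fun _ => x, rfl, rfl, fun i hi => absurd hi (by omega)⟩

lemma dwalk_edge {V : Type} {E : V → V → Prop} {x y : V} (h : E x y) : DWalk E x y 1 :=
  ⟨fun i => if i = 0 then x else y, by simp, by simp, by
    intro i hi
    have : i = 0 := by omega
    subst this; simpa using h⟩

lemma dwalk_trans {V : Type} {E : V → V → Prop} {x y z : V} {n m : ℕ}
    (h1 : DWalk E x y n) (h2 : DWalk E y z m) : DWalk E x z (n + m) := by
  obtain ⟨f, hf0, hfn, hf⟩ := h1
  obtain ⟨g, hg0, hgm, hg⟩ := h2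
  refine ⟨fun i => if i < n then f i else g (i - n), ?_, ?_, ?_⟩
  · by_cases h : 0 < n
    · simpa [h] using hf0
    · have hn0 : n = 0 := by omega
      subst hn0
      simp only [lt_irrefl, if_false]
      rw [hg0, ← hfn, hf0]
  · have h1' : ¬ n + m < n := by omega
    simp only [h1', if_false]
    rw [Nat.add_sub_cancel_left, hgm]
  · intro i hi
    by_cases h1' : i + 1 < n
    · have h2' : i < n := by omega
      simp only [h1', h2', if_true]
      exact hf i h2'
    · by_cases h2' : i < n
      · have hin : i + 1 = n := by omega
        simp only [h1', h2', if_true, if_false]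
        have : g (i + 1 - n) = f (i + 1) := by
          rw [hin, Nat.sub_self, hg0, ← hfn]
        rw [this]
        exact hf i h2'
      · simp only [h1', h2', if_false]
        have h3 : i + 1 - n = (i - n) + 1 := by omega
        rw [h3]
        exact hg (i - n) (by omega)

lemma dwalk_mul {V : Type} {E : V → V → Prop} {v : V} {n : ℕ}
    (h : DWalk E v v n) : ∀ t : ℕ, DWalk E v v (t * n)
  | 0 => by simpa using dwalk_nil E v
  | (t+1) => by
      have := dwalk_trans (dwalk_mul h t) h
      simpa [Nat.succ_mul] using this

lemma dwalk_chain {V : Type} {E : V → V → Prop} (g : ℕ → V) (d : ℕ → ℕ) :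
    ∀ s : ℕ, (∀ i < s, DWalk E (g i) (g (i + 1)) (d i)) →
      DWalk E (g 0) (g s) (∑ i ∈ Finset.range s, d i)
  | 0, _ => by simpa using dwalk_nil E (g 0)
  | (s+1), h => by
      have h1 := dwalk_chain g d s (fun i hi => h i (by omega))
      have h2 := h s (by omega)
      have := dwalk_trans h1 h2
      simpa [Finset.sum_range_succ] using this


lemma rep_lemma : ∀ (m : ℕ) (c : ℕ → ℕ) (n : ℕ), (∀ i < m, 0 < c i) →
    (Finset.range m).gcd c ∣ n → ((Finset.range m).sum c) ^ 2 ≤ n →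
    ∃ x : ℕ → ℕ, n = ∑ i ∈ Finset.range m, x i * c i
  | 0, c, n, _, hdvd, _ => by
      refine ⟨fun _ => 0, ?_⟩
      have : n = 0 := zero_dvd_iff.mp (by simpa using hdvd)
      simpa using this
  | (m+1), c, n, hpos, hdvd, hbig => by
      have hg : (Finset.range (m+1)).gcd c = Nat.gcd (c m) ((Finset.range m).gcd c) := by
        rw [Finset.range_add_one, Finset.gcd_insert]; rfl
      set g' : ℕ := (Finset.range m).gcd c with hg'def
      rcases Nat.eq_zero_or_pos m with hm0 | hmpos
      · subst hm0
        have hcg : c 0 ∣ n := by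
          have : g' = 0 := by simp [hg'def]
          rw [hg, this, Nat.gcd_zero_right] at hdvd
          exact hdvd
        refine ⟨fun _ => n / c 0, ?_⟩
        simp [Nat.div_mul_cancel hcg]
      · -- m ≥ 1, so g' > 0
        have hg'pos : 0 < g' := by
          rcases Nat.eq_zero_or_pos g' with h0 | h
          · exfalso
            have h00 : c 0 = 0 :=
              Finset.gcd_eq_zero_iff.mp h0 0 (by simp [Finset.mem_range, hmpos])
            exact absurd h00 (hpos 0 (by omega)).ne'
          · exact h
        have hd : Nat.gcd (c m) g' ∣ n := hg ▸ hdvd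
        set d : ℕ := Nat.gcd (c m) g' with hddef
        set q : ℕ := n / d with hqdef
        have hdq : d * q = n := Nat.mul_div_cancel' hd
        set A : ℤ := Nat.gcdA (c m) g' with hAdef
        have hbez : (d : ℤ) = (c m : ℤ) * A + (g' : ℤ) * Nat.gcdB (c m) g' :=
          Nat.gcd_eq_gcd_ab (c m) g'
        set x0' : ℤ := (A * q) % (g' : ℤ) with hx0'def
        have hx0'nonneg : 0 ≤ x0' := Int.emod_nonneg _ (by exact_mod_cast hg'pos.ne')
        have hx0'lt : x0' < (g' : ℤ) := Int.emod_lt_of_pos _ (by exact_mod_cast hg'pos)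
        have hdvd2 : (g' : ℤ) ∣ (n : ℤ) - x0' * (c m : ℤ) := by
          have h1 : (n : ℤ) = (c m : ℤ) * A * q + (g' : ℤ) * Nat.gcdB (c m) g' * q := by
            rw [← hdq]; push_cast; rw [hbez]; ring
          have h2 : (g' : ℤ) ∣ (n : ℤ) - (A * q) * (c m : ℤ) :=
            ⟨Nat.gcdB (c m) g' * q, by rw [h1]; ring⟩
          have h4 : (g' : ℤ) ∣ A * (q : ℤ) - x0' :=
            ⟨A * q / g', by rw [hx0'def, Int.emod_def]; ring⟩
          have h3 : (g' : ℤ) ∣ (A * q) * (c m : ℤ) - x0' * (c m : ℤ) := by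
            have := h4.mul_right (c m : ℤ)
            simpa [sub_mul] using this
          have := dvd_add h2 h3
          simpa using this
        set x0 : ℕ := x0'.toNat with hx0def
        have hx0lt : x0 < g' := by omega
        -- bounds
        set S' : ℕ := (Finset.range m).sum c with hS'def
        have hsum : (Finset.range (m+1)).sum c = S' + c m := by
          rw [Finset.sum_range_succ]
        have hg'le : g' ≤ S' := by
          have h1 : g' ∣ c 0 := Finset.gcd_dvd (by simp [Finset.mem_range, hmpos])
          have h2 : g' ≤ c 0 := Nat.le_of_dvd (hpos 0 (by omega)) h1
          have h3 : c 0 ≤ S' := Finset.single_le_sum (f := c) (fun i _ => Nat.zero_le _)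
            (by simp [Finset.mem_range, hmpos])
          omega
        have hx0cm : x0 * c m + S' ^ 2 ≤ n := by
          have h1 : x0 * c m ≤ g' * c m := Nat.mul_le_mul_right _ (by omega)
          have h2 : g' * c m ≤ S' * c m := Nat.mul_le_mul_right _ hg'le
          have h3 : (S' + c m) ^ 2 ≤ n := hsum ▸ hbig
          nlinarith
        set n' : ℕ := n - x0 * c m with hn'def
        have hn'eq : n = n' + x0 * c m := by omega
        have hg'n' : g' ∣ n' := by
          have hcast : (n' : ℤ) = (n : ℤ) - x0' * (c m : ℤ) := by
            have h5 : (x0 : ℤ) = x0' := Int.toNat_of_nonneg hx0'nonneg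
            rw [hn'def, Nat.cast_sub (by omega), Nat.cast_mul, h5]
          have := hdvd2
          rw [← hcast] at this
          exact_mod_cast this
        obtain ⟨x, hx⟩ := rep_lemma m c n' (fun i hi => hpos i (by omega)) hg'n' (by rw [← hS'def]; omega)
        refine ⟨fun i => if i = m then x0 else x i, ?_⟩
        rw [Finset.sum_range_succ]
        have : ∑ i ∈ Finset.range m, (if i = m then x0 else x i) * c i
            = ∑ i ∈ Finset.range m, x i * c i := by
          apply Finset.sum_congr rfl
          intro i hi
          have : i ≠ m := by simp only [Finset.mem_range] at hi; omega
          simp [this]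
        rw [this]
        have h6 : (fun i => if i = m then x0 else x i) m = x0 := by simp
        rw [h6, ← hx]
        omega

/-- Corollary 2.7: with `k, ℓ` as in (*), suppose `H` is an oriented graph containing a
directed path of length at most `64k` from any vertex to any other vertex. If for some odd
`s < k` the underlying undirected graph of `H` contains a cycle of length `s`, then `H`
contains a closed directed walk of length `ℓ`. -/
theorem stmt_9 (k l : ℕ) (hk : 7 ≤ k) (hl : 10 ^ 7 * k ^ 6 ≤ l)
    (hknd : ¬ k ∣ l) (hmin : ∀ m : ℕ, 2 < m → m < k → m ∣ l)
    (V : Type) (E : V → V → Prop) (hE : IsOriented E)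
    (hpath : ∀ x y : V, x ≠ y → ∃ m ≤ 64 * k, HasDirPath E x y m)
    (s : ℕ) (hs3 : 3 ≤ s) (hodd : Odd s) (hsk : s < k)
    (hcyc : ∃ f : ℕ → V, f s = f 0 ∧ Set.InjOn f (Set.Iio s) ∧
      ∀ i < s, E (f i) (f (i + 1)) ∨ E (f (i + 1)) (f i)) :
    HasClosedDirWalk E l := by
  classical
  obtain ⟨f, hfs, hinj, hor⟩ := hcyc
  -- consecutive cycle vertices are distinct
  have hne : ∀ i < s, f i ≠ f (i + 1) := by
    intro i hi hEq
    rcases Nat.lt_or_ge (i + 1) s with h | h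
    · have := hinj (show i ∈ Set.Iio s from hi) (show i + 1 ∈ Set.Iio s from h) hEq
      omega
    · have hi1 : i + 1 = s := by omega
      rw [hi1, hfs] at hEq
      have := hinj (show i ∈ Set.Iio s from hi) (show 0 ∈ Set.Iio s by
        simp only [Set.mem_Iio]; omega) hEq
      omega
  -- choose, for each edge of the cycle, a forward walk and a closed loop
  have hwc : ∀ i : ℕ, ∃ wc : ℕ × ℕ, i < s →
      (DWalk E (f i) (f (i + 1)) wc.1 ∧ DWalk E (f i) (f i) wc.2 ∧
        (wc.1 = 1 ∨ wc.1 + 1 = wc.2) ∧ 1 ≤ wc.1 ∧ wc.1 ≤ 64 * k ∧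
        1 ≤ wc.2 ∧ wc.2 ≤ 64 * k + 1) := by
    intro i
    by_cases hi : i < s
    · rcases hor i hi with h | h
      · -- forward edge; return path from f (i+1) to f i
        obtain ⟨m, hm, g, hg0, hgm, hgE, -⟩ := hpath (f (i + 1)) (f i) (hne i hi).symm
        have hgW : DWalk E (f (i + 1)) (f i) m := ⟨g, hg0, hgm, hgE⟩
        have hm1 : 1 ≤ m := by
          rcases Nat.eq_zero_or_pos m with h0 | h1
          · exfalso; apply hne i hi; rw [← hgm, h0, hg0]
          · exact h1
        exact ⟨(1, 1 + m), fun _ => ⟨dwalk_edge h, dwalk_trans (dwalk_edge h) hgW,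
          Or.inl rfl, le_refl _, by omega, by omega, by omega⟩⟩
      · -- backward edge; path from f i to f (i+1)
        obtain ⟨m, hm, g, hg0, hgm, hgE, -⟩ := hpath (f i) (f (i + 1)) (hne i hi)
        have hgW : DWalk E (f i) (f (i + 1)) m := ⟨g, hg0, hgm, hgE⟩
        have hm1 : 1 ≤ m := by
          rcases Nat.eq_zero_or_pos m with h0 | h1
          · exfalso; apply hne i hi; rw [← hgm, h0, hg0]
          · exact h1
        exact ⟨(m, m + 1), fun _ => ⟨hgW, dwalk_trans hgW (dwalk_edge h),
          Or.inr rfl, hm1, hm, by omega, by omega⟩⟩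
    · exact ⟨(1, 1), fun h => absurd h hi⟩
  choose wc hspec using hwc
  set w : ℕ → ℕ := fun i => (wc i).1 with hwdef
  set c : ℕ → ℕ := fun i => (wc i).2 with hcdef
  set N1 : ℕ := ∑ i ∈ Finset.range s, w i with hN1def
  -- achievable closed walk lengths
  have hbase : ∀ x : ℕ → ℕ, DWalk E (f 0) (f 0) (∑ i ∈ Finset.range s, (x i * c i + w i)) := by
    intro x
    have := dwalk_chain f (fun i => x i * c i + w i) s (fun i hi =>
      dwalk_trans (dwalk_mul ((hspec i hi).2.1) (x i)) ((hspec i hi).1))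
    rwa [hfs] at this
  have hN1walk : DWalk E (f 0) (f 0) N1 := by
    have := hbase (fun _ => 0)
    simpa using this
  have hach : ∀ (x : ℕ → ℕ) (t : ℕ),
      DWalk E (f 0) (f 0) (t * N1 + ∑ i ∈ Finset.range s, (x i * c i + w i)) :=
    fun x t => dwalk_trans (dwalk_mul hN1walk t) (hbase x)
  -- the gcd of all achievable generators
  set C : ℕ → ℕ := fun i => if i < s then c i else N1 with hCdef
  set G : ℕ := (Finset.range (s + 1)).gcd C with hGdef
  have hGN1 : G ∣ N1 := by
    have h : G ∣ C s := Finset.gcd_dvd (show s ∈ Finset.range (s + 1) by simp)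
    simpa [hCdef] using h
  have hGc : ∀ i < s, G ∣ c i := by
    intro i hi
    have h : G ∣ C i := Finset.gcd_dvd (show i ∈ Finset.range (s + 1) by
      simp only [Finset.mem_range]; omega)
    simpa [hCdef, hi] using h
  -- G divides l
  have hGl : G ∣ l := by
    set A : Finset ℕ := (Finset.range s).filter (fun i => w i = 1) with hAdef
    set Ac : Finset ℕ := (Finset.range s).filter (fun i => ¬ w i = 1) with hAcdef
    have hcard : A.card + Ac.card = s := by
      rw [hAdef, hAcdef, Finset.card_filter_add_card_filter_not]
      simp
    have hsplit : (∑ i ∈ A, w i) + (∑ i ∈ Ac, w i) = N1 := by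
      rw [hAdef, hAcdef, hN1def, Finset.sum_filter_add_sum_filter_not]
    have hA : ∑ i ∈ A, w i = A.card := by
      rw [Finset.sum_congr rfl (fun i hi => (Finset.mem_filter.mp hi).2)]
      simp
      rfl
    have hT : G ∣ ∑ i ∈ Ac, (w i + 1) := by
      apply Finset.dvd_sum
      intro i hi
      have hi' := Finset.mem_filter.mp hi
      have hlt : i < s := Finset.mem_range.mp hi'.1
      rcases (hspec i hlt).2.2.1 with h1 | h2
      · exact absurd h1 hi'.2
      · rw [show w i + 1 = c i from h2]
        exact hGc i hlt
    have hT' : ∑ i ∈ Ac, (w i + 1) = (∑ i ∈ Ac, w i) + Ac.card := by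
      rw [Finset.sum_add_distrib]
      simp
    have hab : (G : ℤ) ∣ (A.card : ℤ) - Ac.card := by
      have h1 : (G : ℤ) ∣ (N1 : ℤ) := Int.natCast_dvd_natCast.mpr hGN1
      have h2 : (G : ℤ) ∣ ((∑ i ∈ Ac, (w i + 1) : ℕ) : ℤ) := Int.natCast_dvd_natCast.mpr hT
      have heq : (A.card : ℤ) - Ac.card = (N1 : ℤ) - (∑ i ∈ Ac, (w i + 1) : ℕ) := by
        have h3 := hT'
        have h4 := hsplit
        have h5 := hA
        omega
      rw [heq]
      exact dvd_sub h1 h2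
    set dd : ℕ := ((A.card : ℤ) - Ac.card).natAbs with hdddef
    have hGdd : G ∣ dd := by
      have := Int.natAbs_dvd_natAbs.mpr hab
      simpa using this
    have hsodd : s % 2 = 1 := Nat.odd_iff.mp hodd
    have hddodd : dd % 2 = 1 := by omega
    have hddle : dd ≤ s := by omega
    have hddpos : 0 < dd := by omega
    have hGle : G ≤ dd := Nat.le_of_dvd hddpos hGdd
    have hG2 : G ≠ 2 := by
      intro h2
      rw [h2] at hGdd
      omega
    rcases Nat.lt_or_ge G 3 with h3 | h3
    · have : G = 1 ∨ G = 0 := by omega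
      rcases this with h | h
      · rw [h]; exact one_dvd l
      · rw [h] at hGdd; omega
    · exact hmin G (by omega) (by omega)
  -- bounds
  have hwle : ∀ i < s, w i ≤ 64 * k := fun i hi => (hspec i hi).2.2.2.2.1
  have hcle : ∀ i < s, c i ≤ 64 * k + 1 := fun i hi => (hspec i hi).2.2.2.2.2.2
  have hN1le : N1 ≤ 64 * k ^ 2 := by
    calc N1 ≤ ∑ i ∈ Finset.range s, (64 * k) :=
          Finset.sum_le_sum (fun i hi => hwle i (Finset.mem_range.mp hi))
    _ = s * (64 * k) := by rw [Finset.sum_const, smul_eq_mul, Finset.card_range]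
    _ ≤ 64 * k ^ 2 := by nlinarith
  have hcsumle : ∑ i ∈ Finset.range s, c i ≤ 64 * k ^ 2 + k := by
    calc ∑ i ∈ Finset.range s, c i ≤ ∑ i ∈ Finset.range s, (64 * k + 1) :=
          Finset.sum_le_sum (fun i hi => hcle i (Finset.mem_range.mp hi))
    _ = s * (64 * k + 1) := by rw [Finset.sum_const, smul_eq_mul, Finset.card_range]
    _ ≤ 64 * k ^ 2 + k := by nlinarith
  have hCsum : (Finset.range (s + 1)).sum C ≤ 129 * k ^ 2 + k := by
    have h1 : (Finset.range (s + 1)).sum C = (∑ i ∈ Finset.range s, c i) + N1 := by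
      rw [Finset.sum_range_succ]
      congr 1
      · exact Finset.sum_congr rfl (fun i hi => by simp [hCdef, Finset.mem_range.mp hi])
      · simp [hCdef]
    rw [h1]
    omega
  have hkk : k * k = k ^ 2 := by ring
  have hk26 : k ^ 2 ≤ k ^ 6 := Nat.pow_le_pow_right (by omega) (by omega)
  have hk46 : k ^ 4 ≤ k ^ 6 := Nat.pow_le_pow_right (by omega) (by omega)
  have hN1l : N1 ≤ l := by omega
  have hbig : ((Finset.range (s + 1)).sum C) ^ 2 ≤ l - N1 := by
    have h1 : ((Finset.range (s + 1)).sum C) ^ 2 ≤ (129 * k ^ 2 + k) ^ 2 :=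
      Nat.pow_le_pow_left hCsum 2
    have h2 : (129 * k ^ 2 + k) ^ 2 ≤ 16900 * k ^ 4 := by nlinarith
    have h5 : 16900 * k ^ 4 + 64 * k ^ 2 ≤ 10 ^ 7 * k ^ 6 := by omega
    omega
  have hGdvd : G ∣ l - N1 := Nat.dvd_sub hGl hGN1
  have hCpos : ∀ i < s + 1, 0 < C i := by
    intro i hi
    by_cases h : i < s
    · simp only [hCdef, if_pos h]
      have h6 : 1 ≤ c i := (hspec i h).2.2.2.2.2.1
      omega
    · simp only [hCdef, if_neg h]
      have h0 : 1 ≤ w 0 := (hspec 0 (by omega)).2.2.2.1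
      have h7 : w 0 ≤ N1 := hN1def ▸ Finset.single_le_sum (f := w) (fun i _ => Nat.zero_le _)
        (Finset.mem_range.mpr (by omega))
      omega
  obtain ⟨x, hx⟩ := rep_lemma (s + 1) C (l - N1) hCpos hGdvd hbig
  -- assemble
  have hxsum : l = x s * N1 + ∑ i ∈ Finset.range s, (x i * c i + w i) := by
    have h1 : ∑ i ∈ Finset.range (s + 1), x i * C i
        = (∑ i ∈ Finset.range s, x i * c i) + x s * N1 := by
      rw [Finset.sum_range_succ]
      congr 1
      · apply Finset.sum_congr rfl
        intro i hi
        simp [hCdef, Finset.mem_range.mp hi]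
      · simp [hCdef]
    have h2 : ∑ i ∈ Finset.range s, (x i * c i + w i)
        = (∑ i ∈ Finset.range s, x i * c i) + N1 := by
      rw [Finset.sum_add_distrib]
    rw [h1] at hx
    omega
  obtain ⟨gw, hg0, hgl, hgE⟩ := hach x (x s)
  rw [← hxsum] at hgl hgE
  exact ⟨gw, by rw [hgl, hg0], hgE⟩
end

section
/- Let k ≥ 4 be an integer. Every undirected graph on n vertices which contains no odd cycle of length less than k and has minimum degree δ > 2n/k is bipartite. -/
namespace AES

open SimpleGraph Walk

variable {V : Type} {G : SimpleGraph V}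

lemma split_walk : ∀ {u v : V} (p : G.Walk u v) (i j : ℕ), i ≤ j → j ≤ p.length →
    ∃ (q : G.Walk u (p.getVert i)) (m : G.Walk (p.getVert i) (p.getVert j))
      (r : G.Walk (p.getVert j) v),
      q.length = i ∧ m.length = j - i ∧ r.length = p.length - j := by
  intro u v p
  induction p with
  | nil =>
    intro i j hij hj
    simp only [Walk.length_nil, Nat.le_zero] at hj
    subst hj
    simp only [Nat.le_zero] at hij
    subst hij
    exact ⟨.nil, .nil, .nil, by simp⟩
  | cons h p ih =>
    intro i j hij hj
    match i, j with
    | 0, 0 =>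
      refine ⟨Walk.nil.copy rfl (Walk.getVert_zero _).symm,
        Walk.nil.copy (Walk.getVert_zero _).symm (Walk.getVert_zero _).symm,
        (Walk.cons h p).copy (Walk.getVert_zero _).symm rfl, by simp⟩
    | 0, (j' + 1) =>
      obtain ⟨q0, m0, r0, hq0, hm0, hr0⟩ := ih 0 j' (Nat.zero_le _) (by
        simpa [Nat.succ_le_succ_iff] using hj)
      refine ⟨Walk.nil.copy rfl (Walk.getVert_zero _).symm,
        (Walk.cons h (q0.append m0)).copy (Walk.getVert_zero _).symm rfl, r0, by simp, ?_, ?_⟩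
      · simp [hq0, hm0]
      · simpa using hr0
    | (i' + 1), (j' + 1) =>
      obtain ⟨q0, m0, r0, hq0, hm0, hr0⟩ := ih i' j' (by omega) (by
        simpa [Nat.succ_le_succ_iff] using hj)
      exact ⟨Walk.cons h q0, m0, r0, by simp [hq0], by simpa using hm0, by simpa using hr0⟩

lemma support_get : ∀ {u v : V} (p : G.Walk u v) (k : ℕ) (hk : k < p.support.length),
    p.support.get ⟨k, hk⟩ = p.getVert k := by
  intro u v p
  induction p with
  | nil => intro k hk; simp at hk; subst hk; rfl
  | cons h p ih =>
    intro k hk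
    match k with
    | 0 => rfl
    | (k' + 1) =>
      simp only [Walk.support_cons] at hk ⊢
      exact ih k' (by simpa using hk)

lemma edges_get : ∀ {u v : V} (p : G.Walk u v) (k : ℕ) (hk : k < p.edges.length),
    p.edges.get ⟨k, hk⟩ = s(p.getVert k, p.getVert (k + 1)) := by
  intro u v p
  induction p with
  | nil => intro k hk; simp at hk
  | cons h p ih =>
    intro k hk
    match k with
    | 0 => simp [Walk.getVert_cons_succ]
    | (k' + 1) =>
      simp only [Walk.edges_cons] at hk ⊢
      exact ih k' (by simpa using hk)


lemma min_cycle {ℓ : ℕ} {v : V} (w : G.Walk v v) (hw : w.length = ℓ) (hodd : Odd ℓ)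
    (hmin : ∀ (x : V) (c : G.Walk x x), Odd c.length → ℓ ≤ c.length) :
    w.IsCycle ∧ (∀ i j, i < ℓ → j < ℓ → w.getVert i = w.getVert j → i = j) := by
  classical
  cases w with
  | nil =>
    rw [← hw] at hodd
    simp [Nat.odd_iff] at hodd
  | @cons _ u _ h p =>
    rw [Walk.length_cons] at hw
    set m := p.length with hm
    -- p.support nodup
    have hA : p.support.Nodup := by
      by_contra hA
      rw [List.nodup_iff_injective_get] at hA
      simp only [Function.Injective] at hA
      push_neg at hA
      obtain ⟨i, j, hget, hne⟩ := hA
      -- wlog i < j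
      have key : ∀ (i j : Fin p.support.length), i < j → p.support.get i = p.support.get j → False := by
        intro i j hij hget
        have hslen : p.support.length = m + 1 := by simp [Walk.length_support, hm]
        have hi : (i : ℕ) < m + 1 := by have := i.isLt; omega
        have hj2 : (j : ℕ) ≤ m := by have := j.isLt; omega
        have hgv : p.getVert i = p.getVert j := by
          rw [← support_get p i (by have := i.isLt; omega), ← support_get p j (by have := j.isLt; omega)]
          exact hget
        obtain ⟨q, mid, r, hq, hmid, hr⟩ := split_walk p i j (le_of_lt hij) hj2
        -- middle closed walk
        have hgv' : p.getVert (j : ℕ) = p.getVert (i : ℕ) := hgv.symm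
        set mid' : G.Walk (p.getVert (i : ℕ)) (p.getVert (i : ℕ)) := mid.copy rfl hgv' with hmid'
        have hmidlen : mid'.length = (j : ℕ) - i := by simp [hmid', hmid]
        set outer : G.Walk v v := Walk.cons h (q.append (r.copy hgv' rfl)) with houter
        have houterlen : outer.length = 1 + i + (m - j) := by
          simp [houter, hq, hr]; omega
        have hsum : mid'.length + outer.length = ℓ := by omega
        rcases Nat.even_or_odd mid'.length with he | ho
        · have : Odd outer.length := by
            rcases hodd with ⟨t, ht⟩; rcases he with ⟨s, hs⟩
            refine ⟨t - s, by omega⟩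
          have := hmin _ _ this
          omega
        · have := hmin _ _ ho
          have hij' : (i : ℕ) < j := hij
          omega
      rcases lt_trichotomy i j with hij | hij | hij
      · exact key i j hij hget
      · exact absurd hij hne
      · exact key j i hij hget.symm
    have hPinj : ∀ i j : ℕ, i ≤ m → j ≤ m → p.getVert i = p.getVert j → i = j := by
      intro i j hi hj hgv
      have hslen : p.support.length = m + 1 := by simp [Walk.length_support, hm]
      have h1 : p.support.get ⟨i, by omega⟩ = p.support.get ⟨j, by omega⟩ := by
        rw [support_get, support_get]; exact hgv
      have := List.nodup_iff_injective_get.mp hA h1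
      simpa using congrArg Fin.val this
    have hm2 : 2 ≤ m := by
      rcases Nat.eq_zero_or_pos m with h0 | h1
      · exfalso
        have : p.getVert 0 = v := by
          rw [Walk.getVert_of_length_le p (by omega)]
        rw [Walk.getVert_zero] at this
        subst this
        exact G.irrefl h
      · rcases hodd with ⟨t, ht⟩
        omega
    have hB : s(v, u) ∉ p.edges := by
      intro hmem
      obtain ⟨⟨kk, hk⟩, hkeq⟩ := List.mem_iff_get.mp hmem
      rw [edges_get] at hkeq
      have hklen : kk < m := by simpa [Walk.length_edges] using hk
      have hvm : p.getVert m = v := Walk.getVert_length p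
      rcases Sym2.eq_iff.mp hkeq with ⟨h1, h2⟩ | ⟨h1, h2⟩
      · have := hPinj kk m (by omega) le_rfl (by rw [h1, hvm])
        omega
      · have hk0 : kk = 0 := hPinj kk 0 (by omega) (by omega) (by simp [h1])
        have : kk + 1 = m := hPinj (kk + 1) m (by omega) le_rfl (by rw [h2, hvm])
        omega
    refine ⟨(Walk.cons_isCycle_iff p h).mpr ⟨Walk.IsPath.mk' hA, hB⟩, ?_⟩
    intro i j hi hj hgv
    match i, j with
    | 0, 0 => rfl
    | 0, (j' + 1) =>
      exfalso
      rw [Walk.getVert_zero, Walk.getVert_cons_succ] at hgv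
      have : m = j' := hPinj m j' le_rfl (by omega) (by rw [Walk.getVert_length, ← hgv])
      omega
    | (i' + 1), 0 =>
      exfalso
      rw [Walk.getVert_zero, Walk.getVert_cons_succ] at hgv
      have : i' = m := hPinj i' m (by omega) le_rfl (by rw [Walk.getVert_length, hgv])
      omega
    | (i' + 1), (j' + 1) =>
      rw [Walk.getVert_cons_succ, Walk.getVert_cons_succ] at hgv
      have := hPinj i' j' (by omega) (by omega) hgv
      omega


lemma arc_walk (f : ℕ → V) (hf : ∀ i, G.Adj (f i) (f (i + 1))) (s : ℕ) :
    ∀ m : ℕ, ∃ P : G.Walk (f s) (f (s + m)), P.length = m := by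
  intro m
  induction m with
  | zero => exact ⟨Walk.nil, rfl⟩
  | succ n ih =>
    obtain ⟨P, hP⟩ := ih
    exact ⟨P.concat (hf (s + n)), by simp [hP]⟩

lemma core {ℓ : ℕ} (hl5 : 5 ≤ ℓ) (hlodd : Odd ℓ)
    (hmin : ∀ (x : V) (c : G.Walk x x), Odd c.length → ℓ ≤ c.length)
    (f : ℕ → V) (hf : ∀ i, G.Adj (f i) (f (i + 1))) (hper : ∀ i, f (i + ℓ) = f i)
    (x : V) (a b c : ℕ) (hab : a < b) (hbc : b < c) (hcl : c < ℓ)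
    (h1 : G.Adj x (f a)) (h2 : G.Adj x (f b)) (h3 : G.Adj x (f c)) : False := by
  have hl2 : ℓ % 2 = 1 := Nat.odd_iff.mp hlodd
  -- choose an odd gap m ≤ ℓ - 3 between one of the pairs
  have hgap : ∃ mg, mg % 2 = 1 ∧ mg + 3 ≤ ℓ ∧
      (mg = b - a ∨ mg = c - b ∨ mg = ℓ - c + a) := by
    by_contra hgap
    push_neg at hgap
    have g1 := hgap (b - a)
    have g2 := hgap (c - b)
    have g3 := hgap (ℓ - c + a)
    omega
  obtain ⟨mg, hmodd, hm3, hcase⟩ := hgap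
  have build : ∀ (s : ℕ) (hxs : G.Adj x (f s)) (hxe : G.Adj (f (s + mg)) x), False := by
    intro s hxs hxe
    obtain ⟨P, hP⟩ := arc_walk f hf s mg
    have W : G.Walk x x := Walk.cons hxs (P.concat hxe)
    have hWlen : (Walk.cons hxs (P.concat hxe)).length = mg + 2 := by simp [hP]
    have := hmin _ _ (by rw [hWlen]; exact ⟨(mg + 1) / 2, by omega⟩)
    omega
  rcases hcase with hmg | hmg | hmg
  · refine build a h1 ?_
    have : a + mg = b := by omega
    rw [this]; exact h2.symm
  · refine build b h2 ?_
    have : b + mg = c := by omega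
    rw [this]; exact h3.symm
  · refine build c h3 ?_
    have : c + mg = a + ℓ := by omega
    rw [this, hper]; exact h1.symm


lemma no_odd_closed [Fintype V] (k : ℕ) (hk : 4 ≤ k)
    (hodd : ∀ (v : V) (w : G.Walk v v), w.IsCycle → Odd w.length → k ≤ w.length)
    (hdeg : ∀ v : V, 2 * (Fintype.card V : ℝ) / (k : ℝ) < ((G.neighborSet v).ncard : ℝ)) :
    ∀ (x : V) (w : G.Walk x x), ¬ Odd w.length := by
  classical
  by_contra hex
  push_neg at hex
  obtain ⟨x0, w0, hw0⟩ := hex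
  have hPex : ∃ n, ∃ (v : V) (w : G.Walk v v), w.length = n ∧ Odd n :=
    ⟨w0.length, x0, w0, rfl, hw0⟩
  set ℓ := Nat.find hPex with hℓ
  obtain ⟨v, w, hwlen, hlodd⟩ := Nat.find_spec hPex
  rw [← hℓ] at hwlen hlodd
  have hmin : ∀ (y : V) (c : G.Walk y y), Odd c.length → ℓ ≤ c.length := by
    intro y c hc
    by_contra hlt
    exact Nat.find_min hPex (by omega) ⟨y, c, rfl, hc⟩
  obtain ⟨hcyc, hinj⟩ := min_cycle w hwlen hlodd hmin
  have hkl : k ≤ ℓ := by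
    have := hodd v w hcyc (by rw [hwlen]; exact hlodd)
    omega
  have hl5 : 5 ≤ ℓ := by have := Nat.odd_iff.mp hlodd; omega
  have hl0 : 0 < ℓ := by omega
  set f : ℕ → V := fun i => w.getVert (i % ℓ) with hf'
  have hper : ∀ i, f (i + ℓ) = f i := by intro i; simp [hf', Nat.add_mod_right]
  have hfi : ∀ i, i < ℓ → f i = w.getVert i := by
    intro i hi; simp [hf', Nat.mod_eq_of_lt hi]
  have hf : ∀ i, G.Adj (f i) (f (i + 1)) := by
    intro i
    have him : i % ℓ < ℓ := Nat.mod_lt _ hl0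
    have hmod : (i + 1) % ℓ = (i % ℓ + 1) % ℓ := by
      conv_lhs => rw [Nat.add_mod, Nat.mod_eq_of_lt (show 1 < ℓ by omega)]
    rcases Nat.lt_or_ge (i % ℓ + 1) ℓ with hlt | hge
    · have h2 : (i + 1) % ℓ = i % ℓ + 1 := by rw [hmod, Nat.mod_eq_of_lt hlt]
      simp only [hf', h2]
      exact w.adj_getVert_succ (by omega)
    · have heq : i % ℓ + 1 = ℓ := by omega
      have h2 : (i + 1) % ℓ = 0 := by rw [hmod, heq, Nat.mod_self]
      simp only [hf', h2]
      have := w.adj_getVert_succ (i := ℓ - 1) (by omega)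
      have hvl : w.getVert (ℓ - 1 + 1) = w.getVert 0 := by
        rw [Walk.getVert_zero, show ℓ - 1 + 1 = ℓ by omega, ← hwlen, Walk.getVert_length]
      rw [hvl] at this
      rwa [show i % ℓ = ℓ - 1 by omega]
  set n := Fintype.card V with hn
  set C : Finset V := (Finset.range ℓ).image f with hC
  have hCcard : C.card = ℓ := by
    rw [hC, Finset.card_image_of_injOn, Finset.card_range]
    intro i hi j hj hij
    simp only [Finset.coe_range, Set.mem_Iio] at hi hj
    rw [hfi i hi, hfi j hj] at hij
    exact hinj i j hi hj hij
  have hkey : ∀ y : V, (C.filter (fun c => G.Adj y c)).card ≤ 2 := by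
    intro y
    by_contra hgt
    push_neg at hgt
    obtain ⟨a', b', c', ha', hb', hc', hab', hac', hbc'⟩ := Finset.two_lt_card_iff.mp hgt
    simp only [Finset.mem_filter, hC, Finset.mem_image, Finset.mem_range] at ha' hb' hc'
    obtain ⟨⟨ia, hia, hfa⟩, hya⟩ := ha'
    obtain ⟨⟨ib, hib, hfb⟩, hyb⟩ := hb'
    obtain ⟨⟨ic, hic, hfc⟩, hyc⟩ := hc'
    rw [← hfa] at hya; rw [← hfb] at hyb; rw [← hfc] at hyc
    have hiab : ia ≠ ib := fun hh => hab' (by rw [← hfa, ← hfb, hh])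
    have hiac : ia ≠ ic := fun hh => hac' (by rw [← hfa, ← hfc, hh])
    have hibc : ib ≠ ic := fun hh => hbc' (by rw [← hfb, ← hfc, hh])
    have sym : ∀ p q r : ℕ, p < q → q < r → r < ℓ → G.Adj y (f p) → G.Adj y (f q) →
        G.Adj y (f r) → False := fun p q r hpq hqr hrl a1 a2 a3 =>
      core hl5 hlodd hmin f hf hper y p q r hpq hqr hrl a1 a2 a3
    rcases lt_trichotomy ia ib with h1 | h1 | h1
    · rcases lt_trichotomy ib ic with h2 | h2 | h2
      · exact sym ia ib ic h1 h2 hic hya hyb hyc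
      · exact hibc h2
      · rcases lt_trichotomy ia ic with h3 | h3 | h3
        · exact sym ia ic ib h3 h2 hib hya hyc hyb
        · exact hiac h3
        · exact sym ic ia ib h3 h1 hib hyc hya hyb
    · exact hiab h1
    · rcases lt_trichotomy ia ic with h2 | h2 | h2
      · exact sym ib ia ic h1 h2 hic hyb hya hyc
      · exact hiac h2
      · rcases lt_trichotomy ib ic with h3 | h3 | h3
        · exact sym ib ic ia h3 h2 hia hyb hyc hya
        · exact hibc h3
        · exact sym ic ib ia h3 h1 hia hyc hyb hya
  -- double counting
  have hsum1 : ∑ y : V, (C.filter (fun c => G.Adj y c)).card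
      = ∑ c ∈ C, (Finset.univ.filter (fun y : V => G.Adj y c)).card := by
    simp_rw [Finset.card_filter]
    rw [Finset.sum_comm]
  have hdegeq : ∀ c : V, (Finset.univ.filter (fun y : V => G.Adj y c)).card = G.degree c := by
    intro c
    rw [← card_neighborFinset_eq_degree]
    congr 1
    ext y
    simp [adj_comm]
  have hub : ∑ c ∈ C, G.degree c ≤ 2 * n := by
    calc ∑ c ∈ C, G.degree c = ∑ y : V, (C.filter (fun c => G.Adj y c)).card := by
          rw [hsum1]; exact Finset.sum_congr rfl fun c _ => (hdegeq c).symm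
      _ ≤ ∑ _y : V, 2 := Finset.sum_le_sum fun y _ => hkey y
      _ = 2 * n := by simp [hn, mul_comm]
  have hdeg' : ∀ c : V, 2 * (n : ℝ) / (k : ℝ) < (G.degree c : ℝ) := by
    intro c
    have h := hdeg c
    rwa [Set.ncard_eq_toFinset_card', ← neighborFinset_def, card_neighborFinset_eq_degree] at h
  have hCne : C.Nonempty := by rw [← Finset.card_pos, hCcard]; omega
  have hk0 : (0 : ℝ) < (k : ℝ) := by exact_mod_cast (by omega : 0 < k)
  have hlow : 2 * (n : ℝ) < ∑ c ∈ C, (G.degree c : ℝ) := by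
    have h1 : ∑ c ∈ C, (2 * (n : ℝ) / (k : ℝ)) < ∑ c ∈ C, (G.degree c : ℝ) :=
      Finset.sum_lt_sum_of_nonempty hCne fun c _ => hdeg' c
    have h2 : ∑ _c ∈ C, (2 * (n : ℝ) / (k : ℝ)) = (ℓ : ℝ) * (2 * (n : ℝ) / (k : ℝ)) := by
      rw [Finset.sum_const, hCcard, nsmul_eq_mul]
    have hkl' : (k : ℝ) ≤ (ℓ : ℝ) := Nat.cast_le.mpr hkl
    have hq0 : (0 : ℝ) ≤ 2 * (n : ℝ) / (k : ℝ) := by positivity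
    have h3 : 2 * (n : ℝ) ≤ (ℓ : ℝ) * (2 * (n : ℝ) / (k : ℝ)) := by
      calc 2 * (n : ℝ) = (k : ℝ) * (2 * (n : ℝ) / (k : ℝ)) := by field_simp
        _ ≤ (ℓ : ℝ) * (2 * (n : ℝ) / (k : ℝ)) := mul_le_mul_of_nonneg_right hkl' hq0
    linarith
  have hub' : ∑ c ∈ C, (G.degree c : ℝ) ≤ 2 * (n : ℝ) := by
    exact_mod_cast Nat.cast_le.mpr hub |>.trans_eq (by push_cast; ring)
  linarith


lemma bipartition (H : ∀ (x : V) (w : G.Walk x x), ¬ Odd w.length) :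
    ∃ S : Set V, ∀ u v : V, G.Adj u v → (u ∈ S ↔ v ∉ S) := by
  classical
  let root : V → V := fun x => (G.connectedComponentMk x).out
  have hroot : ∀ x, G.Reachable (root x) x := by
    intro x
    apply ConnectedComponent.eq.mp
    show G.connectedComponentMk (G.connectedComponentMk x).out = G.connectedComponentMk x
    exact (G.connectedComponentMk x).out_eq
  refine ⟨{x | ∃ p : G.Walk (root x) x, Even p.length}, ?_⟩
  intro u v h
  have hru : root v = root u := by
    show (G.connectedComponentMk v).out = (G.connectedComponentMk u).out
    rw [show G.connectedComponentMk v = G.connectedComponentMk u from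
      ConnectedComponent.eq.mpr ⟨Walk.cons h.symm Walk.nil⟩]
  constructor
  · rintro ⟨p, hp⟩ hv
    obtain ⟨q, hq⟩ := hv
    refine H (root u) ((p.concat h).append (q.copy hru rfl).reverse) ?_
    rcases hp with ⟨s1, hs1⟩
    rcases hq with ⟨s2, hs2⟩
    refine ⟨s1 + s2, ?_⟩
    rw [Walk.length_append, Walk.length_concat, Walk.length_reverse, Walk.length_copy, hs1, hs2]
    ring
  · intro hv
    obtain ⟨q⟩ := hroot v
    rcases Nat.even_or_odd q.length with he | ho
    · exact absurd ⟨q, he⟩ hv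
    · refine ⟨((q.copy hru rfl).concat h.symm), ?_⟩
      rw [Walk.length_concat, Walk.length_copy]
      rcases ho with ⟨t, ht⟩
      exact ⟨t + 1, by omega⟩




end AES

/-- Andrásfai–Erdős–Sós (Theorem 2.8): for `k ≥ 4`, every undirected graph on `n` vertices
containing no odd cycle of length less than `k` and with minimum degree `δ > 2n/k` is
bipartite. -/
theorem stmt_10 (k : ℕ) (hk : 4 ≤ k) (V : Type) [Fintype V] (G : SimpleGraph V)
    (hodd : ∀ (v : V) (w : G.Walk v v), w.IsCycle → Odd w.length → k ≤ w.length)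
    (hdeg : ∀ v : V, 2 * (Fintype.card V : ℝ) / (k : ℝ) < ((G.neighborSet v).ncard : ℝ)) :
    ∃ S : Set V, ∀ u v : V, G.Adj u v → (u ∈ S ↔ v ∉ S) := by
  exact AES.bipartition (AES.no_odd_closed k hk hodd hdeg)
end

section
/- Let k be a natural number and let H be an oriented graph whose underlying undirected graph is bipartite, and suppose that for all natural numbers a ≠ b with a + b < k, H contains no closed walk of length a + b with a edges oriented forwards and b edges oriented backwards. Fix a vertex x of H, and for each i ≥ 1 let X_i be the set of vertices reachable from x by a directed walk of length exactly i, and let Y_i be the set of vertices from which x is reachable by a directed walk of length exactly i. Then for all i ≠ j with i, j ≤ ⌈k/2⌉ one has X_i ∩ X_j = ∅ and Y_i ∩ Y_j = ∅. -/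
/-- The set of vertices reachable from `x` by a directed walk of length exactly `i`. -/
def ForwardSet {V : Type} (E : V → V → Prop) (x : V) (i : ℕ) : Set V :=
  {v | ∃ f : ℕ → V, f 0 = x ∧ f i = v ∧ ∀ j < i, E (f j) (f (j + 1))}

/-- The set of vertices from which `x` is reachable by a directed walk of length exactly `i`. -/
def BackwardSet {V : Type} (E : V → V → Prop) (x : V) (i : ℕ) : Set V :=
  {v | ∃ f : ℕ → V, f 0 = v ∧ f i = x ∧ ∀ j < i, E (f j) (f (j + 1))}

/-- Two directed walks with the same endpoints give a mixed closed walk. -/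
lemma mixed_of_two_walks {V : Type} (E : V → V → Prop) (hE : IsOriented E) (i j : ℕ)
    (P Q : ℕ → V) (h0 : P 0 = Q 0) (h1 : P i = Q j)
    (hP : ∀ t < i, E (P t) (P (t + 1))) (hQ : ∀ t < j, E (Q t) (Q (t + 1))) :
    HasMixedClosedWalk E i j := by
  classical
  set g : ℕ → V := fun t => if t ≤ i then P t else Q (i + j - t) with hg
  have hgQ : ∀ t, i ≤ t → t ≤ i + j → g t = Q (i + j - t) := by
    intro t hti htij
    by_cases h' : t ≤ i
    · have : t = i := le_antisymm h' hti
      subst this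
      simp only [hg, if_pos le_rfl, h1]
      congr 1
      omega
    · simp only [hg, if_neg h']
  have hback : ∀ t, i ≤ t → t < i + j → E (g (t + 1)) (g t) := by
    intro t hti ht
    rw [hgQ t hti (by omega), hgQ (t + 1) (by omega) (by omega)]
    have : i + j - t = (i + j - (t + 1)) + 1 := by omega
    rw [this]
    exact hQ _ (by omega)
  have hfwd : ∀ t, t < i → E (g t) (g (t + 1)) := by
    intro t h
    simp only [hg, if_pos (le_of_lt h), if_pos (Nat.succ_le_of_lt h)]
    exact hP t h
  have key : ∀ t, t < i + j → (E (g t) (g (t + 1)) ↔ t < i) := by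
    intro t ht
    constructor
    · intro hEd
      by_contra h
      exact hE.2 _ _ (hback t (le_of_not_gt h) ht) hEd
    · exact hfwd t
  have keyb : ∀ t, t < i + j → (E (g (t + 1)) (g t) ↔ i ≤ t) := by
    intro t ht
    constructor
    · intro hEd
      by_contra h
      exact hE.2 _ _ (hfwd t (lt_of_not_ge h)) hEd
    · intro hti
      exact hback t hti ht
  refine ⟨g, ?_, ?_, ?_, ?_⟩
  · rcases Nat.eq_zero_or_pos j with hj | hj
    · subst hj
      simp only [hg, Nat.add_zero, if_pos le_rfl, if_pos (Nat.zero_le i)]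
      rw [h1, ← h0]
    · rw [hgQ (i + j) (by omega) le_rfl]
      simp only [hg, Nat.sub_self, if_pos (Nat.zero_le i), h0]
  · intro t ht
    by_cases h : t < i
    · exact Or.inl ((key t ht).mpr h)
    · exact Or.inr ((keyb t ht).mpr (le_of_not_gt h))
  · have : {t : ℕ | t < i + j ∧ E (g t) (g (t + 1))} = ↑(Finset.range i) := by
      ext t
      simp only [Set.mem_setOf_eq, Finset.coe_range, Set.mem_Iio]
      constructor
      · rintro ⟨ht, hEd⟩
        exact (key t ht).mp hEd
      · intro h
        exact ⟨by omega, (key t (by omega)).mpr h⟩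
    rw [this, Set.ncard_coe_finset, Finset.card_range]
  · have : {t : ℕ | t < i + j ∧ E (g (t + 1)) (g t)} = ↑(Finset.Ico i (i + j)) := by
      ext t
      simp only [Set.mem_setOf_eq, Finset.coe_Ico, Set.mem_Ico]
      constructor
      · rintro ⟨ht, hEd⟩
        exact ⟨(keyb t ht).mp hEd, ht⟩
      · rintro ⟨h1', h2'⟩
        exact ⟨h2', (keyb t h2').mpr h1'⟩
    rw [this, Set.ncard_coe_finset, Nat.card_Ico]
    omega

/-- In a "bipartite" digraph every mixed closed walk has even length. -/
lemma even_of_closed {V : Type} (E : V → V → Prop) (S : Set V)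
    (hS : ∀ u v : V, E u v → (u ∈ S ↔ v ∉ S)) (f : ℕ → V) (n : ℕ)
    (hf : f n = f 0) (he : ∀ t < n, E (f t) (f (t + 1)) ∨ E (f (t + 1)) (f t)) :
    Even n := by
  have key : ∀ t ≤ n, ((f t ∈ S ↔ f 0 ∈ S) ↔ Even t) := by
    intro t
    induction t with
    | zero => intro _; simp
    | succ t ih =>
      intro ht
      have ih' := ih (by omega)
      have hflip : f (t + 1) ∈ S ↔ f t ∉ S := by
        rcases he t (by omega) with h | h
        · have := hS _ _ h
          tauto
        · exact hS _ _ h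
      rw [Nat.even_add_one, ← ih']
      tauto
  have := (key n le_rfl).mp (by rw [hf])
  exact this

/-- The Claim in the proof of Lemma 2.9: if the underlying graph of the oriented graph `H` is
bipartite and `H` has no closed walk with `a` forward and `b` backward edges for any `a ≠ b`
with `a + b < k`, then for all `i ≠ j` with `1 ≤ i, j ≤ ⌈k/2⌉ = (k+1)/2`, the sets `X_i, X_j`
are disjoint, and so are `Y_i, Y_j`. -/
theorem stmt_12 (k : ℕ) (V : Type) (E : V → V → Prop) (hE : IsOriented E)
    (hbip : ∃ S : Set V, ∀ u v : V, E u v → (u ∈ S ↔ v ∉ S))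
    (hnowalk : ∀ a b : ℕ, a ≠ b → a + b < k → ¬ HasMixedClosedWalk E a b)
    (x : V) :
    ∀ i j : ℕ, 1 ≤ i → 1 ≤ j → i ≠ j → i ≤ (k + 1) / 2 → j ≤ (k + 1) / 2 →
      ForwardSet E x i ∩ ForwardSet E x j = ∅ ∧
      BackwardSet E x i ∩ BackwardSet E x j = ∅ := by
  intro i j hi hj hij hik hjk
  obtain ⟨S, hS⟩ := hbip
  have main : ¬ HasMixedClosedWalk E i j := by
    intro hmw
    have heven : Even (i + j) := by
      obtain ⟨f, hf0, hfe, -, -⟩ := hmw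
      exact even_of_closed E S hS f (i + j) hf0 hfe
    obtain ⟨m, hm⟩ := heven
    rcases lt_or_ge (i + j) k with hlt | hge
    · exact hnowalk i j hij hlt hmw
    · omega
  constructor
  · rw [Set.eq_empty_iff_forall_notMem]
    rintro v ⟨⟨P, hP0, hPi, hPe⟩, ⟨Q, hQ0, hQj, hQe⟩⟩
    exact main (mixed_of_two_walks E hE i j P Q (hP0.trans hQ0.symm)
      (hPi.trans hQj.symm) hPe hQe)
  · rw [Set.eq_empty_iff_forall_notMem]
    rintro v ⟨⟨P, hP0, hPi, hPe⟩, ⟨Q, hQ0, hQj, hQe⟩⟩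
    exact main (mixed_of_two_walks E hE i j P Q (hP0.trans hQ0.symm)
      (hPi.trans hQj.symm) hPe hQe)
end

section
/- Let ℓ > 4 be an even integer and let k > 2 be minimal such that k does not divide ℓ. Then there exists an oriented graph G on n = ⌊(k−1)/2⌋·(ℓ−2) + 1 vertices with minimum semidegree δ⁰(G) ≥ ⌊n/k⌋ + 1 that contains no directed cycle of length greater than ℓ − 1. -/
/-- label of a vertex: `L` for the hub vertex, position within its block otherwise. -/
def lab (q L : ℕ) (v : Fin (q * L + 1)) : ℕ := if v.val = q * L then L else v.val % L

/-- The edge relation: same block (or hub involved), and cyclic label-distance in `[1, L/2]`. -/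
def EE (q L : ℕ) (u v : Fin (q * L + 1)) : Prop :=
  (u.val / L = v.val / L ∨ u.val = q * L ∨ v.val = q * L) ∧
  1 ≤ (lab q L v + (L + 1) - lab q L u) % (L + 1) ∧
  (lab q L v + (L + 1) - lab q L u) % (L + 1) ≤ L / 2

lemma add_mod_inj {m a r1 r2 : ℕ} (h1 : r1 < m) (h2 : r2 < m)
    (he : (a + r1) % m = (a + r2) % m) : r1 = r2 := by
  have : r1 % m = r2 % m := Nat.ModEq.add_left_cancel' a he
  rwa [Nat.mod_eq_of_lt h1, Nat.mod_eq_of_lt h2] at this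

lemma lab_le (q L : ℕ) (hL : 0 < L) (v : Fin (q * L + 1)) : lab q L v ≤ L := by
  unfold lab; split
  · exact le_refl _
  · exact le_of_lt (Nat.mod_lt _ hL)

lemma lab_eq_L (q L : ℕ) (hL : 0 < L) (v : Fin (q * L + 1)) :
    lab q L v = L ↔ v.val = q * L := by
  unfold lab; split
  · simp [*]
  · constructor
    · intro h; exact absurd h (Nat.ne_of_lt (Nat.mod_lt _ hL))
    · intro h; simp_all

/-- distance sum lemma -/

lemma dist_sum {L a b : ℕ} (ha : a ≤ L) (hb : b ≤ L) (hab : a ≠ b) :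
    (b + (L + 1) - a) % (L + 1) + (a + (L + 1) - b) % (L + 1) = L + 1 := by
  rcases Nat.lt_or_ge a b with hlt | hge
  · have e1 : b + (L + 1) - a = (b - a) + (L + 1) := by omega
    have e2 : (b + (L + 1) - a) % (L + 1) = b - a := by
      rw [e1, Nat.add_mod_right, Nat.mod_eq_of_lt (by omega)]
    have e3 : (a + (L + 1) - b) % (L + 1) = a + (L + 1) - b :=
      Nat.mod_eq_of_lt (by omega)
    omega
  · have hlt : b < a := lt_of_le_of_ne hge (Ne.symm hab)
    have e1 : a + (L + 1) - b = (a - b) + (L + 1) := by omega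
    have e2 : (a + (L + 1) - b) % (L + 1) = a - b := by
      rw [e1, Nat.add_mod_right, Nat.mod_eq_of_lt (by omega)]
    have e3 : (b + (L + 1) - a) % (L + 1) = b + (L + 1) - a :=
      Nat.mod_eq_of_lt (by omega)
    omega

lemma EE_oriented (q L : ℕ) (hL : 0 < L) (hLe : Even L) : IsOriented (EE q L) := by
  obtain ⟨r, hr⟩ := hLe
  constructor
  · rintro v ⟨-, h1, -⟩
    have : (lab q L v + (L + 1) - lab q L v) % (L + 1) = 0 := by
      have : lab q L v + (L + 1) - lab q L v = L + 1 := by omega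
      rw [this, Nat.mod_self]
    omega
  · rintro u v ⟨-, h1, h2⟩ ⟨-, h1', h2'⟩
    have hab : lab q L u ≠ lab q L v := by
      intro he
      rw [he] at h1
      have : (lab q L v + (L + 1) - lab q L v) % (L + 1) = 0 := by
        have : lab q L v + (L + 1) - lab q L v = L + 1 := by omega
        rw [this, Nat.mod_self]
      omega
    have := dist_sum (lab_le q L hL u) (lab_le q L hL v) hab
    omega

lemma target (q L : ℕ) (hq : 1 ≤ q) (hL : 0 < L) (v : Fin (q * L + 1)) (t : ℕ) (ht : t ≤ L) :
    ∃ w : Fin (q * L + 1), lab q L w = t ∧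
      (v.val / L = w.val / L ∨ v.val = q * L ∨ w.val = q * L) := by
  rcases eq_or_lt_of_le ht with hteq | htlt
  · exact ⟨⟨q * L, Nat.lt_succ_self _⟩, by simp [lab, hteq], Or.inr (Or.inr rfl)⟩
  · set c := min (v.val / L) (q - 1) with hc
    have hcq : c + 1 ≤ q := by omega
    have hwlt : c * L + t < q * L + 1 := by
      have : (c + 1) * L ≤ q * L := Nat.mul_le_mul_right L hcq
      have : c * L + L ≤ q * L := by rw [Nat.add_mul] at this; omega
      omega
    refine ⟨⟨c * L + t, hwlt⟩, ?_, ?_⟩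
    · have hne : c * L + t ≠ q * L := by
        have : (c + 1) * L ≤ q * L := Nat.mul_le_mul_right L hcq
        rw [Nat.add_mul] at this; omega
      simp only [lab, hne, if_false]
      rw [Nat.mul_comm c L, Nat.mul_add_mod, Nat.mod_eq_of_lt htlt]
    · by_cases hv : v.val = q * L
      · exact Or.inr (Or.inl hv)
      · left
        have hvlt : v.val < q * L := by omega
        have hdc : (c * L + t) / L = c := by
          rw [Nat.mul_comm c L, Nat.mul_add_div hL, Nat.div_eq_of_lt htlt]; omega
        rw [hdc, hc]
        have : v.val / L < q := Nat.div_lt_of_lt_mul (Nat.mul_comm q L ▸ hvlt)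
        omega

lemma dist_back {L a r : ℕ} (ha : a ≤ L) (hr1 : 1 ≤ r) (hr : r ≤ L) :
    ((a + r) % (L + 1) + (L + 1) - a) % (L + 1) = r := by
  rcases Nat.lt_or_ge (a + r) (L + 1) with hlt | hge
  · rw [Nat.mod_eq_of_lt hlt]
    have : a + r + (L + 1) - a = r + (L + 1) := by omega
    rw [this, Nat.add_mod_right, Nat.mod_eq_of_lt (by omega)]
  · have e1 : (a + r) % (L + 1) = a + r - (L + 1) := by
      rw [Nat.mod_eq_sub_mod hge, Nat.mod_eq_of_lt (by omega)]
    rw [e1]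
    have : a + r - (L + 1) + (L + 1) - a = r := by omega
    rw [this, Nat.mod_eq_of_lt (by omega)]

lemma dist_fwd {L a r : ℕ} (ha : a ≤ L) (hr1 : 1 ≤ r) (hr : r ≤ L) :
    (a + (L + 1) - (a + (L + 1) - r) % (L + 1)) % (L + 1) = r := by
  rcases le_or_gt r a with hle | hgt
  · have e1 : a + (L + 1) - r = (a - r) + (L + 1) := by omega
    have e2 : (a + (L + 1) - r) % (L + 1) = a - r := by
      rw [e1, Nat.add_mod_right, Nat.mod_eq_of_lt (by omega)]
    rw [e2]
    have : a + (L + 1) - (a - r) = r + (L + 1) := by omega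
    rw [this, Nat.add_mod_right, Nat.mod_eq_of_lt (by omega)]
  · have e2 : (a + (L + 1) - r) % (L + 1) = a + (L + 1) - r :=
      Nat.mod_eq_of_lt (by omega)
    rw [e2]
    have : a + (L + 1) - (a + (L + 1) - r) = r := by omega
    rw [this, Nat.mod_eq_of_lt (by omega)]

lemma card_aux {V : Type} [Fintype V] {h : ℕ} (φ : Fin h → V) (hinj : Function.Injective φ)
    (S : Set V) (hsub : Set.range φ ⊆ S) : h ≤ S.ncard := by
  calc h = (Set.univ : Set (Fin h)).ncard := by simp [Set.ncard_univ]
    _ = (φ '' Set.univ).ncard := (Set.ncard_image_of_injective _ hinj).symm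
    _ ≤ S.ncard := Set.ncard_le_ncard (by rwa [Set.image_univ]) (Set.toFinite S)

lemma deg_ge (q L : ℕ) (hq : 1 ≤ q) (hL : 0 < L) (v : Fin (q * L + 1)) :
    L / 2 ≤ OutDeg (EE q L) v ∧ L / 2 ≤ InDeg (EE q L) v := by
  set a := lab q L v with ha
  have haL : a ≤ L := lab_le q L hL v
  have hh : L / 2 ≤ L := Nat.div_le_self _ _
  constructor
  · -- out-degree
    have htle : ∀ r : Fin (L / 2), (a + (r.val + 1)) % (L + 1) ≤ L :=
      fun r => Nat.le_of_lt_succ (Nat.mod_lt _ (by omega))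
    choose φ hlab hgrp using fun r : Fin (L / 2) =>
      target q L hq hL v ((a + (r.val + 1)) % (L + 1)) (htle r)
    have hinj : Function.Injective φ := by
      intro r1 r2 he
      have : (a + (r1.val + 1)) % (L + 1) = (a + (r2.val + 1)) % (L + 1) := by
        rw [← hlab r1, ← hlab r2, he]
      have := add_mod_inj (by omega) (by omega) this
      exact Fin.ext (by omega)
    refine card_aux φ hinj _ ?_
    rintro w ⟨r, rfl⟩
    refine ⟨hgrp r, ?_, ?_⟩ <;>
      rw [hlab r, ← ha, dist_back haL (by omega) (by omega)]
    · omega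
    · omega
  · -- in-degree
    have htle : ∀ r : Fin (L / 2), (a + (L + 1) - (r.val + 1)) % (L + 1) ≤ L :=
      fun r => Nat.le_of_lt_succ (Nat.mod_lt _ (by omega))
    choose φ hlab hgrp using fun r : Fin (L / 2) =>
      target q L hq hL v ((a + (L + 1) - (r.val + 1)) % (L + 1)) (htle r)
    have hinj : Function.Injective φ := by
      intro r1 r2 he
      have key : (a + (L + 1 - (r1.val + 1))) % (L + 1)
          = (a + (L + 1 - (r2.val + 1))) % (L + 1) := by
        have e1 : a + (L + 1) - (r1.val + 1) = a + (L + 1 - (r1.val + 1)) := by omega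
        have e2 : a + (L + 1) - (r2.val + 1) = a + (L + 1 - (r2.val + 1)) := by omega
        rw [← e1, ← e2, ← hlab r1, ← hlab r2, he]
      have := add_mod_inj (m := L + 1) (by omega) (by omega) key
      exact Fin.ext (by omega)
    refine card_aux φ hinj _ ?_
    rintro w ⟨r, rfl⟩
    refine ⟨?_, ?_, ?_⟩
    · rcases hgrp r with h | h | h
      · exact Or.inl h.symm
      · exact Or.inr (Or.inr h)
      · exact Or.inr (Or.inl h)
    · rw [hlab r, ← ha, dist_fwd haL (by omega) (by omega)]; omega
    · rw [hlab r, ← ha, dist_fwd haL (by omega) (by omega)]; omega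

lemma cycle_bound (q L : ℕ) (hL : 0 < L) (s : ℕ) (hc : HasDirCycle (EE q L) s) :
    s ≤ L + 1 := by
  obtain ⟨hs3, f, hclose, hedge, hinjOn⟩ := hc
  have hs0 : 0 < s := by omega
  set hubv : Fin (q * L + 1) := ⟨q * L, Nat.lt_succ_self _⟩ with hhubv
  set F : ℕ → Fin (q * L + 1) := fun j => f (j % s) with hF
  -- every consecutive pair along the periodic extension is an edge
  have hFe : ∀ j, EE q L (F j) (F (j + 1)) := by
    intro j
    have hj : j % s < s := Nat.mod_lt _ hs0
    have h1 : (j + 1) % s = (j % s + 1) % s := by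
      rw [Nat.add_mod, Nat.mod_eq_of_lt (show 1 < s by omega)]
    rcases eq_or_lt_of_le (Nat.succ_le_of_lt hj) with heq | hlt
    · have heq' : j % s + 1 = s := heq
      have h2 : (j + 1) % s = 0 := by rw [h1, heq', Nat.mod_self]
      have h3 := hedge (j % s) hj
      rw [heq', hclose] at h3
      simpa [hF, h2] using h3
    · have h2 : (j + 1) % s = j % s + 1 := by rw [h1, Nat.mod_eq_of_lt hlt]
      simp only [hF, h2]
      exact hedge (j % s) hj
  -- block equality propagates along non-hub stretches
  have hgrp : ∀ j, F j ≠ hubv → F (j + 1) ≠ hubv →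
      (F (j + 1)).val / L = (F j).val / L := by
    intro j h1 h2
    rcases (hFe j).1 with h | h | h
    · exact h.symm
    · exact absurd (Fin.ext h) h1
    · exact absurd (Fin.ext h) h2
  have chain : ∀ t j, (∀ u ≤ t, F (j + u) ≠ hubv) →
      (F (j + t)).val / L = (F j).val / L := by
    intro t
    induction t with
    | zero => intro j _; rfl
    | succ t ih =>
      intro j hnh
      have e1 : j + (t + 1) = (j + t) + 1 := by omega
      rw [e1, hgrp (j + t) (hnh t (by omega)) (by rw [← e1]; exact hnh (t + 1) le_rfl)]
      exact ih j fun u hu => hnh u (by omega)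
  -- all non-hub vertices of the cycle lie in one block
  have claim : ∃ c, ∀ i, i < s → f i ≠ hubv → (f i).val / L = c := by
    by_cases hhub : ∃ i0, i0 < s ∧ f i0 = hubv
    · obtain ⟨i0, hi0s, hhub0⟩ := hhub
      have hubuniq : ∀ j, j < s → f j = hubv → j = i0 := fun j hj hfj =>
        hinjOn (Set.mem_Iio.mpr hj) (Set.mem_Iio.mpr hi0s) (hfj.trans hhub0.symm)
      refine ⟨(F (i0 + 1)).val / L, ?_⟩
      intro i hi hne
      have hii0 : i ≠ i0 := fun h => hne (h ▸ hhub0)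
      set t : ℕ := if i0 < i then i - (i0 + 1) else i + s - (i0 + 1) with ht
      have hnh : ∀ u, u ≤ t → F (i0 + 1 + u) ≠ hubv := by
        intro u hu hFu
        have hxlt : (i0 + 1 + u) % s < s := Nat.mod_lt _ hs0
        have hx : (i0 + 1 + u) % s = i0 := hubuniq _ hxlt (by simpa [hF] using hFu)
        have hut : u ≤ t := hu
        rcases lt_or_ge i0 i with h' | h'
        · have ht' : t = i - (i0 + 1) := if_pos h'
          rw [ht'] at hut
          have hcase : i0 + 1 + u < s := by omega
          rw [Nat.mod_eq_of_lt hcase] at hx; omega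
        · have hlt' : i < i0 := lt_of_le_of_ne h' hii0
          have ht' : t = i + s - (i0 + 1) := if_neg (by omega)
          rw [ht'] at hut
          rcases lt_or_ge (i0 + 1 + u) s with hcase | hcase
          · rw [Nat.mod_eq_of_lt hcase] at hx; omega
          · rw [Nat.mod_eq_sub_mod hcase, Nat.mod_eq_of_lt (by omega)] at hx
            omega
      have := chain t (i0 + 1) hnh
      have hFt : F (i0 + 1 + t) = f i := by
        rcases lt_or_ge i0 i with h' | h'
        · have : i0 + 1 + t = i := by simp only [ht, if_pos h']; omega
          rw [this]; simp only [hF, Nat.mod_eq_of_lt hi]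
        · have hlt' : i < i0 := lt_of_le_of_ne h' hii0
          have : i0 + 1 + t = i + s := by simp only [ht, if_neg (by omega : ¬ i0 < i)]; omega
          rw [this]; simp only [hF, Nat.add_mod_right, Nat.mod_eq_of_lt hi]
      rw [hFt] at this
      exact this
    · push_neg at hhub
      refine ⟨(f 0).val / L, ?_⟩
      intro i hi _
      have hnh : ∀ u, u ≤ i → F (0 + u) ≠ hubv := by
        intro u _ hFu
        simp only [hF] at hFu
        exact hhub ((0 + u) % s) (Nat.mod_lt _ hs0) hFu
      have := chain i 0 hnh
      have e0 : F (0 + i) = f i := by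
        simp only [hF, Nat.zero_add, Nat.mod_eq_of_lt hi]
      have e1 : F 0 = f 0 := by simp [hF, Nat.zero_mod]
      rw [e0, e1] at this
      exact this
  obtain ⟨c, hc⟩ := claim
  -- labels give an injection from Fin s into Fin (L+1)
  have hψinj : ∀ i1 i2, i1 < s → i2 < s → lab q L (f i1) = lab q L (f i2) → i1 = i2 := by
    intro i1 i2 h1 h2 he
    by_contra hne
    have hfne : f i1 ≠ f i2 := fun h =>
      hne (hinjOn (Set.mem_Iio.mpr h1) (Set.mem_Iio.mpr h2) h)
    rcases eq_or_lt_of_le (lab_le q L hL (f i1)) with hb | hb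
    · -- both are the hub
      have e1 : (f i1).val = q * L := (lab_eq_L q L hL _).mp hb
      have e2 : (f i2).val = q * L := (lab_eq_L q L hL _).mp (he.symm.trans hb)
      exact hfne (Fin.ext (e1.trans e2.symm))
    · -- both are non-hub, same block, same label ⇒ equal
      have hne1 : (f i1).val ≠ q * L := fun h => by
        have := (lab_eq_L q L hL (f i1)).mpr h; omega
      have hne2 : (f i2).val ≠ q * L := fun h => by
        have := (lab_eq_L q L hL (f i2)).mpr h; omega
      have hb1 : (f i1).val / L = c := hc i1 h1 (fun h => hne1 (by rw [h]))
      have hb2 : (f i2).val / L = c := hc i2 h2 (fun h => hne2 (by rw [h]))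
      have hl1 : lab q L (f i1) = (f i1).val % L := by simp [lab, hne1]
      have hl2 : lab q L (f i2) = (f i2).val % L := by simp [lab, hne2]
      have : (f i1).val = (f i2).val := by
        have d1 := Nat.div_add_mod (f i1).val L
        have d2 := Nat.div_add_mod (f i2).val L
        rw [hl1, hl2] at he
        rw [hb1] at d1; rw [hb2] at d2
        omega
      exact hfne (Fin.ext this)
  have : s = Fintype.card (Fin s) := (Fintype.card_fin s).symm
  rw [this]
  have : Fintype.card (Fin (L + 1)) = L + 1 := Fintype.card_fin _
  rw [← this]
  refine Fintype.card_le_of_injective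
    (fun i => ⟨lab q L (f i.val), Nat.lt_succ_of_le (lab_le q L hL _)⟩) ?_
  intro i1 i2 he
  have := hψinj i1.val i2.val i1.isLt i2.isLt (by simpa using congrArg Fin.val he)
  exact Fin.ext this

/-- Proposition 2.11: for even `ℓ > 4` and `k > 2` minimal not dividing `ℓ`, there is an
oriented graph on `n = ⌊(k−1)/2⌋(ℓ−2) + 1` vertices with minimum semidegree at least
`⌊n/k⌋ + 1` containing no directed cycle of length greater than `ℓ − 1`. -/
theorem stmt_14 (l k : ℕ) (hl4 : 4 < l) (hleven : Even l)
    (hk2 : 2 < k) (hknd : ¬ k ∣ l) (hmin : ∀ m : ℕ, 2 < m → m < k → m ∣ l) :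
    ∃ E : Fin ((k - 1) / 2 * (l - 2) + 1) → Fin ((k - 1) / 2 * (l - 2) + 1) → Prop,
      IsOriented E ∧
      (∀ v, ((k - 1) / 2 * (l - 2) + 1) / k + 1 ≤ OutDeg E v ∧
            ((k - 1) / 2 * (l - 2) + 1) / k + 1 ≤ InDeg E v) ∧
      ∀ s : ℕ, HasDirCycle E s → s ≤ l - 1 := by
  obtain ⟨r, hr⟩ := hleven
  have hl6 : 6 ≤ l := by omega
  have hL : 0 < l - 2 := by omega
  have hLe : Even (l - 2) := ⟨r - 1, by omega⟩
  have hq : 1 ≤ (k - 1) / 2 := by omega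
  refine ⟨EE ((k - 1) / 2) (l - 2), EE_oriented _ _ hL hLe, ?_, ?_⟩
  · -- degree bound
    have hL2 : l - 2 = 2 * ((l - 2) / 2) := by omega
    have step : (k - 1) / 2 * (l - 2) ≤ (k - 1) * ((l - 2) / 2) := by
      calc (k - 1) / 2 * (l - 2) = (k - 1) / 2 * (2 * ((l - 2) / 2)) := by rw [← hL2]
        _ = (2 * ((k - 1) / 2)) * ((l - 2) / 2) := by ring
        _ ≤ (k - 1) * ((l - 2) / 2) := Nat.mul_le_mul_right _ (by omega)
    have step2 : (k - 1) * ((l - 2) / 2) + (l - 2) / 2 = k * ((l - 2) / 2) := by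
      have hk1 : k - 1 + 1 = k := by omega
      calc (k - 1) * ((l - 2) / 2) + (l - 2) / 2 = (k - 1 + 1) * ((l - 2) / 2) := by ring
        _ = k * ((l - 2) / 2) := by rw [hk1]
    have hlt : (k - 1) / 2 * (l - 2) + 1 < ((l - 2) / 2) * k := by
      have hcomm : ((l - 2) / 2) * k = k * ((l - 2) / 2) := Nat.mul_comm _ _
      have : 2 ≤ (l - 2) / 2 := by omega
      omega
    have hdiv : ((k - 1) / 2 * (l - 2) + 1) / k < (l - 2) / 2 :=
      (Nat.div_lt_iff_lt_mul (by omega)).mpr hlt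
    intro v
    obtain ⟨h1, h2⟩ := deg_ge ((k - 1) / 2) (l - 2) hq hL v
    exact ⟨by omega, by omega⟩
  · -- cycle bound
    intro s hs
    have := cycle_bound ((k - 1) / 2) (l - 2) hL s hs
    omega
end
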